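/- Let A, B be bounded operators on a finite-dimensional Hilbert space with ‖A‖, ‖B‖ ≤ M. Then ‖e^{−i(A+B)t} − (e^{−iAt/s} e^{−iBt/s})^s‖ ≤ t² ‖[A,B]‖ / (2s) ≤ 2 t² M² / s for all t ≥ 0 and positive integers s (first-order Trotter error bound). -/

import Mathlib

set_option maxHeartbeats 1000000

open NormedSpace

section TrotterAux

variable {𝔸 : Type*} [NormedRing 𝔸] [StarRing 𝔸] [CStarRing 𝔸]
  [NormedAlgebra ℂ 𝔸] [CompleteSpace 𝔸] [StarModule ℂ 𝔸]

set_option linter.unusedSectionVars false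

lemma trotter_norm_one_le : ‖(1 : 𝔸)‖ ≤ 1 := by
  have h2 : ‖star (1 : 𝔸) * 1‖ = ‖(1:𝔸)‖ * ‖(1:𝔸)‖ := CStarRing.norm_star_mul_self (x := (1:𝔸))
  rw [star_one, one_mul] at h2
  nlinarith [norm_nonneg (1 : 𝔸)]

/-- exp of a skew-adjoint element has norm at most 1. -/
lemma trotter_norm_exp_le_one (x : 𝔸) (hx : star x = -x) : ‖exp x‖ ≤ 1 := by
  have hstar : star (exp x) = exp (-x) := by rw [star_exp, hx]
  have hmul : star (exp x) * exp x = 1 := by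
    let +nondep : NormedAlgebra ℚ 𝔸 := .restrictScalars ℚ ℂ 𝔸
    rw [hstar, ← exp_add_of_commute (Commute.neg_left (Commute.refl x)), neg_add_cancel, exp_zero]
  have h1 : ‖(1 : 𝔸)‖ ≤ 1 := trotter_norm_one_le
  have h2 : ‖star (exp x) * exp x‖ = ‖exp x‖ * ‖exp x‖ :=
    CStarRing.norm_star_mul_self (x := exp x)
  rw [hmul] at h2
  nlinarith [norm_nonneg (exp x)]

lemma trotter_skew_smul (A : 𝔸) (hA : IsSelfAdjoint A) (r : ℝ) :
    star ((r : ℂ) • ((-Complex.I) • A)) = -((r : ℂ) • ((-Complex.I) • A)) := by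
  rw [smul_smul, star_smul, hA.star_eq]
  have hc : star ((r:ℂ) * -Complex.I) = -((r:ℂ) * -Complex.I) := by
    simp [Complex.ext_iff]
  rw [hc]
  exact neg_smul ((r:ℂ) * -Complex.I) A

lemma trotter_comp_ofReal {F : Type*} [NormedAddCommGroup F] [NormedSpace ℂ F]
    {f : ℂ → F} {f' : F} {z : ℝ} (hf : HasDerivAt f f' (z : ℂ)) :
    HasDerivAt (fun y : ℝ => f (y : ℂ)) f' z := by
  have h1 := (hf.hasFDerivAt.restrictScalars ℝ).comp z
    (Complex.ofRealCLM.hasFDerivAt (x := z))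
  convert h1.hasDerivAt using 1
  · rfl
  simp

lemma trotter_F_deriv (C : 𝔸) (r : ℝ) :
    HasDerivAt (fun u : ℝ => exp ((u : ℂ) • C)) (exp ((r : ℂ) • C) * C) r :=
  trotter_comp_ofReal (f := fun z : ℂ => exp (z • C))
    (hasDerivAt_exp_smul_const C ((r : ℝ) : ℂ))

lemma trotter_exp_commute (C X : 𝔸) (h : Commute C X) (z : ℂ) :
    exp (z • C) * X = X * exp (z • C) :=
  by let +nondep : NormedAlgebra ℚ 𝔸 := .restrictScalars ℚ ℂ 𝔸
     exact ((h.smul_left z).exp_left).eq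

lemma trotter_exp_mul_exp_neg (C : 𝔸) (z : ℂ) : exp (z • (-C)) * exp (z • C) = 1 := by
  have h : Commute (z • (-C)) (z • C) :=
    (((Commute.refl C).neg_left).smul_left z).smul_right z
  let +nondep : NormedAlgebra ℚ 𝔸 := .restrictScalars ℚ ℂ 𝔸
  rw [← exp_add_of_commute h, smul_neg, neg_add_cancel, exp_zero]

private lemma trotter_ring_id {R : Type*} [Ring R] (e e' c b : R) (h : e' * c = c * e') :
    e * (c * b - b * c) * e' = e * c * b * e' + e * b * (e' * -c) := by
  rw [mul_neg, h]
  noncomm_ring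

private lemma trotter_ring_id2 {R : Type*} [Ring R] (g fa fb ca cb : R)
    (h1 : fa * ca = ca * fa) (h2 : fb * cb = cb * fb) :
    -(g * (ca + cb)) * (fa * fb) + g * ((fa * ca) * fb + fa * (fb * cb))
      = g * ((fa * cb - cb * fa) * fb) := by
  rw [h1, h2]
  noncomm_ring

/-- Commutator growth bound : `‖[exp(uC), B]‖ ≤ u ‖[C,B]‖` for `C` with unitary flow. -/
lemma trotter_comm_bound (C B : 𝔸) (hC : ∀ r : ℝ, ‖exp ((r:ℂ) • C)‖ ≤ 1)
    (hC' : ∀ r : ℝ, ‖exp ((r:ℂ) • (-C))‖ ≤ 1) (u : ℝ) (hu : 0 ≤ u) :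
    ‖exp ((u:ℂ) • C) * B - B * exp ((u:ℂ) • C)‖ ≤ u * ‖C * B - B * C‖ := by
  set g : ℝ → 𝔸 := fun r => exp ((r:ℂ) • C) * B * exp ((r:ℂ) • (-C)) with hg
  have hderiv : ∀ r : ℝ, HasDerivAt g
      (exp ((r:ℂ) • C) * (C * B - B * C) * exp ((r:ℂ) • (-C))) r := by
    intro r
    have h1 := ((trotter_F_deriv C r).mul_const B).mul (trotter_F_deriv (-C) r)
    have heq : exp ((r:ℂ) • C) * (C * B - B * C) * exp ((r:ℂ) • (-C))
        = exp ((r:ℂ) • C) * C * B * exp ((r:ℂ) • (-C))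
          + exp ((r:ℂ) • C) * B * (exp ((r:ℂ) • (-C)) * -C) :=
      trotter_ring_id _ _ _ _ (trotter_exp_commute (-C) C (Commute.refl C).neg_left ((r:ℝ):ℂ))
    rw [heq]
    exact h1
  have key : ∀ r ∈ (Set.univ : Set ℝ), HasDerivWithinAt g
      (exp ((r:ℂ) • C) * (C * B - B * C) * exp ((r:ℂ) • (-C))) Set.univ r :=
    fun r _ => (hderiv r).hasDerivWithinAt
  have bound : ∀ r ∈ (Set.univ : Set ℝ),
      ‖exp ((r:ℂ) • C) * (C * B - B * C) * exp ((r:ℂ) • (-C))‖ ≤ ‖C * B - B * C‖ := by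
    intro r _
    calc ‖exp ((r:ℂ) • C) * (C * B - B * C) * exp ((r:ℂ) • (-C))‖
        ≤ ‖exp ((r:ℂ) • C) * (C * B - B * C)‖ * ‖exp ((r:ℂ) • (-C))‖ := norm_mul_le _ _
      _ ≤ ‖exp ((r:ℂ) • C)‖ * ‖C * B - B * C‖ * ‖exp ((r:ℂ) • (-C))‖ :=
          mul_le_mul_of_nonneg_right (norm_mul_le _ _) (norm_nonneg _)
      _ ≤ 1 * ‖C * B - B * C‖ * 1 := by
          have h1 : ‖exp ((r:ℂ) • C)‖ * ‖C * B - B * C‖ ≤ 1 * ‖C * B - B * C‖ :=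
            mul_le_mul_of_nonneg_right (hC r) (norm_nonneg _)
          exact mul_le_mul h1 (hC' r) (norm_nonneg _) (by positivity)
      _ = ‖C * B - B * C‖ := by ring
  have hlip := Convex.norm_image_sub_le_of_norm_hasDerivWithin_le key bound convex_univ
    (Set.mem_univ (0:ℝ)) (Set.mem_univ u)
  have hg0 : g 0 = B := by
    simp only [hg]
    rw [Complex.ofReal_zero, zero_smul ℂ C, zero_smul ℂ (-C), exp_zero, one_mul, mul_one]
  have hgu : ‖g u - B‖ ≤ u * ‖C * B - B * C‖ := by
    rw [hg0, sub_zero, Real.norm_eq_abs, abs_of_nonneg hu] at hlip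
    linarith [hlip]
  have hfact : exp ((u:ℂ) • C) * B - B * exp ((u:ℂ) • C)
      = (g u - B) * exp ((u:ℂ) • C) := by
    simp only [hg]
    rw [sub_mul, mul_assoc, mul_assoc, trotter_exp_mul_exp_neg C ((u:ℝ):ℂ), mul_one]
  rw [hfact]
  calc ‖(g u - B) * exp ((u:ℂ) • C)‖ ≤ ‖g u - B‖ * ‖exp ((u:ℂ) • C)‖ := norm_mul_le _ _
    _ ≤ u * ‖C * B - B * C‖ :=  by
        have h2 := mul_le_mul hgu (hC u) (norm_nonneg _)
          (mul_nonneg hu (norm_nonneg (C * B - B * C)))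
        rw [mul_one] at h2
        exact h2

/-- Single Trotter step bound. -/
lemma trotter_step_bound (CA CB : 𝔸)
    (hCA : ∀ r : ℝ, ‖exp ((r:ℂ) • CA)‖ ≤ 1)
    (hCA' : ∀ r : ℝ, ‖exp ((r:ℂ) • (-CA))‖ ≤ 1)
    (hCB : ∀ r : ℝ, ‖exp ((r:ℂ) • CB)‖ ≤ 1)
    (hD : ∀ r : ℝ, ‖exp ((r:ℂ) • (CA + CB))‖ ≤ 1)
    (τ : ℝ) (hτ : 0 ≤ τ) :
    ‖exp ((τ:ℂ) • CA) * exp ((τ:ℂ) • CB) - exp ((τ:ℂ) • (CA + CB))‖ ≤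
      τ ^ 2 * ‖CA * CB - CB * CA‖ / 2 := by
  set D : 𝔸 := CA + CB with hDdef
  set K : ℝ := ‖CA * CB - CB * CA‖ with hK
  set f : ℝ → 𝔸 := fun u =>
    exp (((τ - u : ℝ):ℂ) • D) * (exp ((u:ℂ) • CA) * exp ((u:ℂ) • CB))
      - exp ((τ:ℂ) • D) with hf
  have hderiv : ∀ u : ℝ, HasDerivAt f
      (exp (((τ - u : ℝ):ℂ) • D) *
        ((exp ((u:ℂ) • CA) * CB - CB * exp ((u:ℂ) • CA)) * exp ((u:ℂ) • CB))) u := by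
    intro u
    have hh : HasDerivAt (fun v : ℝ => τ - v) (-1) u := by
      simpa using (hasDerivAt_id u).const_sub τ
    have hG : HasDerivAt (fun v : ℝ => exp (((τ - v : ℝ):ℂ) • D))
        ((-1 : ℝ) • (exp (((τ - u : ℝ):ℂ) • D) * D)) u :=
      HasDerivAt.scomp u (trotter_F_deriv D (τ - u)) hh
    have hG' : HasDerivAt (fun v : ℝ => exp (((τ - v : ℝ):ℂ) • D))
        (-(exp (((τ - u : ℝ):ℂ) • D) * D)) u := by
      rw [neg_one_smul ℝ (exp (((τ - u : ℝ):ℂ) • D) * D)] at hG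
      exact hG
    have h1 := (hG'.mul ((trotter_F_deriv CA u).mul (trotter_F_deriv CB u))).sub_const
      (exp ((τ:ℂ) • D))
    have heq : exp (((τ - u : ℝ):ℂ) • D) *
          ((exp ((u:ℂ) • CA) * CB - CB * exp ((u:ℂ) • CA)) * exp ((u:ℂ) • CB))
        = -(exp (((τ - u : ℝ):ℂ) • D) * D) *
            (exp ((u:ℂ) • CA) * exp ((u:ℂ) • CB)) +
          exp (((τ - u : ℝ):ℂ) • D) *
            ((exp ((u:ℂ) • CA) * CA) * exp ((u:ℂ) • CB) +
              exp ((u:ℂ) • CA) * (exp ((u:ℂ) • CB) * CB)) :=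
      (trotter_ring_id2 (exp (((τ - u : ℝ):ℂ) • D)) (exp ((u:ℂ) • CA))
        (exp ((u:ℂ) • CB)) CA CB
        (trotter_exp_commute CA CA (Commute.refl CA) ((u:ℝ):ℂ))
        (trotter_exp_commute CB CB (Commute.refl CB) ((u:ℝ):ℂ))).symm
    rw [heq]
    exact h1
  have hcont : ContinuousOn f (Set.Icc 0 τ) := fun x _ =>
    (hderiv x).continuousAt.continuousWithinAt
  have hf' : ∀ x ∈ Set.Ico 0 τ, HasDerivWithinAt f
      (exp (((τ - x : ℝ):ℂ) • D) *
        ((exp ((x:ℂ) • CA) * CB - CB * exp ((x:ℂ) • CA)) * exp ((x:ℂ) • CB))) (Set.Ici x) x :=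
    fun x _ => (hderiv x).hasDerivWithinAt
  have ha : ‖f 0‖ ≤ K / 2 * 0 ^ 2 := by
    have h0 : f 0 = 0 := by
      simp only [hf]
      rw [sub_zero, Complex.ofReal_zero, zero_smul ℂ CA, zero_smul ℂ CB, exp_zero, one_mul,
        mul_one, sub_self]
    rw [h0]
    simp
  have hB : ∀ x : ℝ, HasDerivAt (fun x : ℝ => K / 2 * x ^ 2) (K * x) x := by
    intro x
    have h := (hasDerivAt_pow 2 x).const_mul (K / 2)
    refine h.congr_deriv ?_
    norm_num
    ring
  have bound : ∀ x ∈ Set.Ico 0 τ,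
      ‖exp (((τ - x : ℝ):ℂ) • D) *
        ((exp ((x:ℂ) • CA) * CB - CB * exp ((x:ℂ) • CA)) * exp ((x:ℂ) • CB))‖ ≤ K * x := by
    intro x hx
    have hx0 : 0 ≤ x := hx.1
    have hcomm := trotter_comm_bound CA CB hCA hCA' x hx0
    have h3 := norm_mul_le (exp ((x:ℂ) • CA) * CB - CB * exp ((x:ℂ) • CA))
      (exp ((x:ℂ) • CB))
    have h4 := mul_le_mul hcomm (hCB x) (norm_nonneg _)
      (mul_nonneg hx0 (norm_nonneg _))
    have h2 : ‖(exp ((x:ℂ) • CA) * CB - CB * exp ((x:ℂ) • CA)) * exp ((x:ℂ) • CB)‖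
        ≤ x * K := by rw [mul_one] at h4; linarith
    have h5 := norm_mul_le (exp (((τ - x : ℝ):ℂ) • D))
      ((exp ((x:ℂ) • CA) * CB - CB * exp ((x:ℂ) • CA)) * exp ((x:ℂ) • CB))
    have h6 := mul_le_mul (hD (τ - x)) h2 (norm_nonneg _)
      zero_le_one
    rw [one_mul] at h6
    have : K * x = x * K := by ring
    rw [this]
    linarith
  have hmain := image_norm_le_of_norm_deriv_right_le_deriv_boundary hcont hf' ha hB bound
    (Set.right_mem_Icc.2 hτ)
  have hfτ : f τ = exp ((τ:ℂ) • CA) * exp ((τ:ℂ) • CB) - exp ((τ:ℂ) • D) := by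
    simp only [hf]
    rw [sub_self, Complex.ofReal_zero, zero_smul ℂ D, exp_zero, one_mul]
  rw [hfτ] at hmain
  calc ‖exp ((τ:ℂ) • CA) * exp ((τ:ℂ) • CB) - exp ((τ:ℂ) • D)‖ ≤ K / 2 * τ ^ 2 := hmain
    _ = τ ^ 2 * K / 2 := by ring

/-- Telescoping bound for powers of contractions. -/
lemma trotter_pow_bound (U V : 𝔸) (hU : ‖U‖ ≤ 1) (hV : ‖V‖ ≤ 1) (s : ℕ) :
    ‖U ^ s - V ^ s‖ ≤ s * ‖U - V‖ := by
  have hUk : ∀ k : ℕ, ‖U ^ k‖ ≤ 1 := by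
    intro k
    induction k with
    | zero => rw [pow_zero]; exact trotter_norm_one_le
    | succ m ih =>
      have h := norm_mul_le (U ^ m) U
      rw [pow_succ]
      nlinarith [norm_nonneg (U ^ m), norm_nonneg U]
  induction s with
  | zero =>
    rw [pow_zero, pow_zero, sub_self, norm_zero]
    simp
  | succ k ih =>
    have h : U ^ (k+1) - V ^ (k+1) = U ^ k * (U - V) + (U ^ k - V ^ k) * V := by
      rw [pow_succ, pow_succ, mul_sub, sub_mul]
      abel
    calc ‖U ^ (k+1) - V ^ (k+1)‖ ≤ ‖U ^ k * (U - V)‖ + ‖(U ^ k - V ^ k) * V‖ := by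
          rw [h]; exact norm_add_le _ _
      _ ≤ ‖U ^ k‖ * ‖U - V‖ + ‖U ^ k - V ^ k‖ * ‖V‖ :=
          add_le_add (norm_mul_le _ _) (norm_mul_le _ _)
      _ ≤ 1 * ‖U - V‖ + (k * ‖U - V‖) * 1 := by
          have h1 := mul_le_mul_of_nonneg_right (hUk k) (norm_nonneg (U - V))
          have h2 := mul_le_mul ih hV (norm_nonneg V)
            (mul_nonneg (Nat.cast_nonneg k) (norm_nonneg (U - V)))
          rw [mul_one] at h2
          linarith
      _ = (↑(k+1) : ℝ) * ‖U - V‖ := by push_cast; ring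

end TrotterAux

/-- First-order Trotter error bound: for self-adjoint `A, B` with
`‖A‖, ‖B‖ ≤ M`,
`‖e^{−i(A+B)t} − (e^{−iAt/s} e^{−iBt/s})^s‖ ≤ t²‖[A,B]‖/(2s) ≤ 2t²M²/s`. -/
theorem trotter_error_bound
    (n : ℕ) (M : ℝ)
    (A B : EuclideanSpace ℂ (Fin n) →L[ℂ] EuclideanSpace ℂ (Fin n))
    (hA : IsSelfAdjoint A) (hB : IsSelfAdjoint B)
    (hAn : ‖A‖ ≤ M) (hBn : ‖B‖ ≤ M)
    (t : ℝ) (ht : 0 ≤ t) (s : ℕ) (hs : 0 < s) :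
    ‖exp ((-Complex.I * (t:ℂ)) • (A + B)) -
        (exp ((-Complex.I * ((t:ℂ) / (s:ℂ))) • A) *
          exp ((-Complex.I * ((t:ℂ) / (s:ℂ))) • B)) ^ s‖ ≤
      t ^ 2 * ‖A * B - B * A‖ / (2 * s) ∧
    t ^ 2 * ‖A * B - B * A‖ / (2 * s) ≤ 2 * t ^ 2 * M ^ 2 / s := by
  have hs' : (0:ℝ) < (s:ℝ) := by exact_mod_cast hs
  have hs0 : ((s:ℝ)) ≠ 0 := ne_of_gt hs'
  set CA := (-Complex.I) • A with hCAdef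
  set CB := (-Complex.I) • B with hCBdef
  have hCACB : CA + CB = (-Complex.I) • (A + B) := (smul_add _ A B).symm
  have hsA : ∀ r : ℝ, ‖exp ((r:ℂ) • CA)‖ ≤ 1 := fun r =>
    trotter_norm_exp_le_one _ (trotter_skew_smul A hA r)
  have hsB : ∀ r : ℝ, ‖exp ((r:ℂ) • CB)‖ ≤ 1 := fun r =>
    trotter_norm_exp_le_one _ (trotter_skew_smul B hB r)
  have hsD : ∀ r : ℝ, ‖exp ((r:ℂ) • (CA + CB))‖ ≤ 1 := by
    intro r
    rw [hCACB]
    exact trotter_norm_exp_le_one _ (trotter_skew_smul (A + B) (hA.add hB) r)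
  have hsA' : ∀ r : ℝ, ‖exp ((r:ℂ) • (-CA))‖ ≤ 1 := by
    intro r
    have h : (r:ℂ) • (-CA) = ((-r : ℝ):ℂ) • CA := by
      rw [Complex.ofReal_neg]
      exact (smul_neg (r:ℂ) CA).trans (neg_smul (r:ℂ) CA).symm
    rw [h]
    exact hsA (-r)
  set τ : ℝ := t / s with hτdef
  have hτ : 0 ≤ τ := div_nonneg ht (le_of_lt hs')
  have hstep := trotter_step_bound CA CB hsA hsA' hsB hsD τ hτ
  set U := exp ((τ:ℂ) • (CA + CB)) with hUdef
  set V := exp ((τ:ℂ) • CA) * exp ((τ:ℂ) • CB) with hVdef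
  have hU : ‖U‖ ≤ 1 := hsD τ
  have hV : ‖V‖ ≤ 1 := by
    have h1 := norm_mul_le (exp ((τ:ℂ) • CA)) (exp ((τ:ℂ) • CB))
    have h2 := mul_le_mul (hsA τ) (hsB τ) (norm_nonneg _) zero_le_one
    rw [one_mul] at h2
    exact le_trans h1 h2
  -- identify the matrix exponentials
  have hτc : ((τ : ℝ):ℂ) = (t:ℂ) / (s:ℂ) := by
    rw [hτdef]; push_cast; ring
  have hs0c : ((s:ℕ):ℂ) ≠ 0 := Nat.cast_ne_zero.mpr hs.ne'
  have hsc : ((s:ℂ) * ((τ:ℝ):ℂ)) * (-Complex.I) = -Complex.I * (t:ℂ) := by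
    rw [hτc]
    field_simp
  have hT1 : exp ((-Complex.I * (t:ℂ)) • (A + B)) = U ^ s := by
    let +nondep : NormedAlgebra ℚ (EuclideanSpace ℂ (Fin n) →L[ℂ] EuclideanSpace ℂ (Fin n)) :=
      .restrictScalars ℚ ℂ _
    rw [hUdef, ← exp_nsmul, ← Nat.cast_smul_eq_nsmul ℂ s, smul_smul, hCACB, smul_smul, hsc]
  have hT2 : exp ((-Complex.I * ((t:ℂ) / (s:ℂ))) • A) = exp ((τ:ℂ) • CA) := by
    rw [hCAdef, smul_smul, hτc]
    congr 1
    ring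
  have hT3 : exp ((-Complex.I * ((t:ℂ) / (s:ℂ))) • B) = exp ((τ:ℂ) • CB) := by
    rw [hCBdef, smul_smul, hτc]
    congr 1
    ring
  -- commutator norms agree
  have hKeq : ‖CA * CB - CB * CA‖ = ‖A * B - B * A‖ := by
    have h1 : CA * CB = ((-Complex.I) * (-Complex.I)) • (A * B) := by
      rw [hCAdef, hCBdef, smul_mul_assoc, mul_smul_comm, smul_smul]
    have h2 : CB * CA = ((-Complex.I) * (-Complex.I)) • (B * A) := by
      rw [hCAdef, hCBdef, smul_mul_assoc, mul_smul_comm, smul_smul]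
    have hc : (-Complex.I) * (-Complex.I) = (-1 : ℂ) := by
      rw [neg_mul_neg, Complex.I_mul_I]
    rw [h1, h2, hc, ← smul_sub ((-1:ℂ)) (A * B) (B * A), norm_smul ((-1):ℂ) (A * B - B * A)]
    rw [norm_neg, norm_one, one_mul]
  have hpow := trotter_pow_bound U V hU hV s
  have hUV : ‖U - V‖ ≤ τ ^ 2 * ‖A * B - B * A‖ / 2 := by
    rw [norm_sub_rev, ← hKeq]
    exact hstep
  have hfinal1 : ‖U ^ s - V ^ s‖ ≤ t ^ 2 * ‖A * B - B * A‖ / (2 * s) := by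
    have hgen : ∀ K' : ℝ, (s:ℝ) * (τ ^ 2 * K' / 2) = t ^ 2 * K' / (2 * s) := by
      intro K'
      rw [hτdef]
      field_simp
    have h3 := hgen ‖A * B - B * A‖
    calc ‖U ^ s - V ^ s‖ ≤ s * ‖U - V‖ := hpow
      _ ≤ s * (τ ^ 2 * ‖A * B - B * A‖ / 2) :=
          mul_le_mul_of_nonneg_left hUV (Nat.cast_nonneg s)
      _ = t ^ 2 * ‖A * B - B * A‖ / (2 * s) := h3
  constructor
  · rw [hT1, hT2, hT3]
    exact hfinal1
  · have hM0 : 0 ≤ M := le_trans (norm_nonneg A) hAn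
    have hK2 : ‖A * B - B * A‖ ≤ 2 * M ^ 2 := by
      calc ‖A * B - B * A‖ ≤ ‖A * B‖ + ‖B * A‖ := norm_sub_le _ _
        _ ≤ ‖A‖ * ‖B‖ + ‖B‖ * ‖A‖ := add_le_add (norm_mul_le _ _) (norm_mul_le _ _)
        _ ≤ M * M + M * M := by nlinarith [norm_nonneg A, norm_nonneg B]
        _ = 2 * M ^ 2 := by ring
    calc t ^ 2 * ‖A * B - B * A‖ / (2 * s) ≤ t ^ 2 * (2 * M ^ 2) / (2 * s) :=
          (div_le_div_iff_of_pos_right (by positivity)).mpr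
            (mul_le_mul_of_nonneg_left hK2 (sq_nonneg t))
      _ = t ^ 2 * M ^ 2 / s := by field_simp
      _ ≤ 2 * t ^ 2 * M ^ 2 / s :=
          (div_le_div_iff_of_pos_right hs').mpr (by nlinarith [mul_nonneg (sq_nonneg t) (sq_nonneg M)])
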